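/- For every m ≥ 1, k ≥ 1, and weight ω with 0 < ω ≤ min{⌊k/2⌋, m}, the largest cohomological degree i such that ʳΩ_k^{i,ω}(CP^m) ≠ 0 equals 4ωm - (ω² + 2ω) if k is even, ω = k/2 and k/2 ≤ m, and equals (2m-2)k - (ω² - 2ω - 2) otherwise. -/

import Mathlib

/-!
# The (reduced) Chevalley–Eilenberg complex for `ℂP^m`

We model the free graded-commutative algebra on generators
`v_0, v_2, …, v_{2m}` (even, polynomial; `v_{2i}` has degree `2i`, weight `0`, length `1`) and
`w_{2m-1}, w_{2m+1}, …, w_{4m-1}` (odd, exterior; `w_{2m-1+2j}` has degree `2m-1+2j`,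
weight `1`, length `2`) by its monomial basis: a monomial is a pair `(e, S)` where
`e : Fin (m+1) → ℕ` records the exponents of the `v`'s (`e i` is the exponent of `v_{2i}`) and
`S : Finset (Fin (m+1))` records the set of `w`'s occurring (`j ∈ S` means `w_{2m-1+2j}` occurs).
An element of the algebra is a finitely supported `ℚ`-linear combination of monomials.
The differential is the degree `+1` derivation with `∂ v_{2i} = 0` and
`∂ w_{2i-1} = ∑_{a+b=i, 0 ≤ a,b ≤ m} v_{2a} v_{2b}` (for `m ≤ i ≤ 2m`), with the usual
Koszul signs.
-/

noncomputable section

/-- Monomials: exponents of the even generators `v_{2i}` and the set of odd generators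
`w_{2m-1+2j}` occurring. -/
abbrev CEMon (m : ℕ) : Type := (Fin (m + 1) → ℕ) × Finset (Fin (m + 1))

/-- The underlying `ℚ`-vector space of the Chevalley–Eilenberg algebra for `ℂP^m`:
finitely supported linear combinations of monomials. -/
abbrev CEAlg (m : ℕ) : Type := CEMon m →₀ ℚ

/-- Cohomological degree of a monomial: `v_{2i}` has degree `2i` and `w_{2m-1+2j}` has
degree `2m - 1 + 2j`. -/
def CEdeg (m : ℕ) (b : CEMon m) : ℕ :=
  (∑ i : Fin (m + 1), 2 * i.val * b.1 i) + ∑ j ∈ b.2, (2 * m + 2 * j.val - 1)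

/-- Length of a monomial: each `v` has length `1`, each `w` has length `2`. -/
def CElen (m : ℕ) (b : CEMon m) : ℕ := (∑ i : Fin (m + 1), b.1 i) + 2 * b.2.card

/-- Weight of a monomial: each `v` has weight `0`, each `w` has weight `1`. -/
def CEwt (m : ℕ) (b : CEMon m) : ℕ := b.2.card

/-- The differential on a monomial: apply `∂ w_{2(m+j)-1} = ∑_{a+b=m+j, 0 ≤ a,b ≤ m} v_{2a} v_{2b}`
to each odd factor in turn, with the Koszul sign `(-1)^{#{l ∈ S | l < j}}` (writing the odd
factors in increasing order). -/
def CEdMon (m : ℕ) (b : CEMon m) : CEAlg m :=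
  ∑ j ∈ b.2, ∑ a : Fin (m + 1),
    if h : j.val ≤ a.val then
      Finsupp.single
        (b.1 + Pi.single a 1 + Pi.single (⟨m + j.val - a.val, by omega⟩ : Fin (m + 1)) 1,
          b.2.erase j)
        ((-1 : ℚ) ^ (b.2.filter (fun l => l < j)).card)
    else 0

/-- The Chevalley–Eilenberg differential `∂`, as a linear map. -/
def CEd (m : ℕ) : CEAlg m →ₗ[ℚ] CEAlg m :=
  Finsupp.lift (CEAlg m) ℚ (CEMon m) (CEdMon m)

/-- `Ω_k^{i,ω}(ℂP^m)`: the span of the monomials of length `k`, cohomological degree `i` and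
weight `ω`. -/
def CEOmega (m k i ω : ℕ) : Submodule ℚ (CEAlg m) :=
  Finsupp.supported ℚ ℚ {b : CEMon m | CElen m b = k ∧ CEdeg m b = i ∧ CEwt m b = ω}

/-- A monomial is *bad* if it is divisible by `v_{2m}²` or by `w_{4m-1}`. -/
def CEBad (m : ℕ) (b : CEMon m) : Prop :=
  2 ≤ b.1 (Fin.last m) ∨ Fin.last m ∈ b.2

open Classical in
/-- The projection of the Chevalley–Eilenberg algebra onto the span of the *good* monomials
(those not divisible by `v_{2m}²` nor by `w_{4m-1}`), annihilating the bad monomials.  The span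
of the good monomials is canonically identified with the quotient of the algebra by the span of
the bad monomials. -/
def CEproj (m : ℕ) : CEAlg m →ₗ[ℚ] CEAlg m :=
  Finsupp.lift (CEAlg m) ℚ (CEMon m)
    (fun b => if CEBad m b then 0 else Finsupp.single b (1 : ℚ))

/-- The induced differential on the reduced complex `ʳΩ` (realized as the span of the good
monomials, canonically identified with the quotient by the span of the bad monomials). -/
def CErd (m : ℕ) : CEAlg m →ₗ[ℚ] CEAlg m := (CEproj m).comp (CEd m)

/-- `ʳΩ_k^{i,ω}(ℂP^m)`: the reduced complex (the quotient of `Ω_k^{i,ω}(ℂP^m)` by the span of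
the bad monomials, realized as the span of the good monomials of length `k`, degree `i` and
weight `ω`). -/
def CErOmega (m k i ω : ℕ) : Submodule ℚ (CEAlg m) :=
  Finsupp.supported ℚ ℚ
    {b : CEMon m | ¬ CEBad m b ∧ CElen m b = k ∧ CEdeg m b = i ∧ CEwt m b = ω}

/-- The degree-`i` part of the reduced complex `ʳΩ_k^{*,*}(ℂP^m)` (all weights together). -/
def CErOmegaDeg (m k i : ℕ) : Submodule ℚ (CEAlg m) :=
  Finsupp.supported ℚ ℚ {b : CEMon m | ¬ CEBad m b ∧ CElen m b = k ∧ CEdeg m b = i}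

/-- Cocycles of degree `i` in the reduced complex `ʳΩ_k^{*,*}(ℂP^m)`. -/
def CErCocycles (m k i : ℕ) : Submodule ℚ (CEAlg m) :=
  CErOmegaDeg m k i ⊓ LinearMap.ker (CErd m)

/-- The degree-`i` cohomology of the reduced complex `ʳΩ_k^{*,*}(ℂP^m)`:
cocycles of degree `i` modulo the image of the degree-`(i-1)` part under the differential. -/
abbrev CErCohomology (m k i : ℕ) : Type :=
  CErCocycles m k i ⧸
    Submodule.comap (CErCocycles m k i).subtype
      (Submodule.map (CErd m) (CErOmegaDeg m k (i - 1)))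

end

private lemma sum_sq_bound : ∀ (T : Finset ℕ) (n : ℕ), (∀ x ∈ T, x < n) →
    2 * (∑ x ∈ T, x) + T.card * T.card + T.card ≤ 2 * T.card * n := by
  intro T
  induction T using Finset.induction_on_max with
  | empty => intro n _; simp
  | insert a s ha ih =>
    intro n hn
    have hns : a ∉ s := fun h => lt_irrefl a (ha a h)
    have h1 := ih a ha
    have h2 : a + 1 ≤ n := hn a (Finset.mem_insert_self a s)
    rw [Finset.sum_insert hns, Finset.card_insert_of_notMem hns]
    nlinarith [h1, h2]

private lemma gauss (n : ℕ) : 2 * (∑ i ∈ Finset.range n, (i : ℤ)) = n * (n - 1) := by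
  induction n with
  | zero => simp
  | succ p ih =>
    rw [Finset.sum_range_succ]
    push_cast at ih ⊢
    linarith

private lemma sum_attachFin {n : ℕ} (s : Finset ℕ) (h : ∀ x ∈ s, x < n) (f : ℕ → ℕ) :
    ∑ j ∈ s.attachFin h, f j.val = ∑ x ∈ s, f x := by
  refine Finset.sum_bij (fun (a : Fin n) _ => a.val) ?_ ?_ ?_ ?_
  · intro a ha; exact (Finset.mem_attachFin h).1 ha
  · intro a _ b _ hab; exact Fin.ext hab
  · intro x hx; exact ⟨⟨x, h x hx⟩, (Finset.mem_attachFin h).2 hx, rfl⟩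
  · intro a _; rfl

private lemma supported_ne_bot_iff {α : Type*} (s : Set α) :
    Finsupp.supported ℚ ℚ s ≠ ⊥ ↔ s.Nonempty := by
  constructor
  · intro h
    rw [Submodule.ne_bot_iff] at h
    obtain ⟨x, hx, hx0⟩ := h
    obtain ⟨b, hb⟩ := Finsupp.support_nonempty_iff.2 hx0
    exact ⟨b, (Finsupp.mem_supported ℚ x).1 hx hb⟩
  · rintro ⟨b, hb⟩
    rw [Submodule.ne_bot_iff]
    refine ⟨Finsupp.single b 1, ?_, by simp⟩
    rw [Finsupp.mem_supported, Finsupp.support_single_ne_zero b one_ne_zero]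
    simpa using hb

private lemma sum_mul_single {n : ℕ} (a : Fin n) (c : ℕ) (g : Fin n → ℕ) :
    ∑ i : Fin n, g i * (Pi.single a c : Fin n → ℕ) i = g a * c := by
  rw [Finset.sum_eq_single a]
  · simp
  · intro b _ hb; simp [Pi.single_apply, hb]
  · simp
open Classical in
/-- For every `m ≥ 1`, `k ≥ 1`, and weight `0 < ω ≤ min {⌊k/2⌋, m}`, the largest
cohomological degree `i` with `ʳΩ_k^{i,ω}(ℂP^m) ≠ 0` equals `4ωm - (ω² + 2ω)` if `k` is even,
`ω = k/2` and `k/2 ≤ m`, and equals `(2m-2)k - (ω² - 2ω - 2)` otherwise. -/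
theorem reduced_max_degree (m k ω : ℕ) (hm : 1 ≤ m) (hk : 1 ≤ k)
    (hω : 0 < ω) (hω' : ω ≤ min (k / 2) m) :
    ∃ D : ℕ, IsGreatest {i : ℕ | CErOmega m k i ω ≠ ⊥} D ∧
      (D : ℤ) =
        if Even k ∧ ω = k / 2 ∧ k / 2 ≤ m then
          4 * (ω : ℤ) * m - ((ω : ℤ) ^ 2 + 2 * ω)
        else
          (2 * (m : ℤ) - 2) * k - ((ω : ℤ) ^ 2 - 2 * ω - 2) := by
  have hωk : ω ≤ k / 2 := le_trans hω' (min_le_left _ _)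
  have hωm : ω ≤ m := le_trans hω' (min_le_right _ _)
  have hω2 : 2 * ω ≤ k := by omega
  have hA' : ω ^ 2 + 2 * ω ≤ 4 * ω * m := by nlinarith
  set t := k - 2 * ω with htdef
  set A := 4 * ω * m - (ω ^ 2 + 2 * ω) with hAdef
  have hAeq : A + (ω ^ 2 + 2 * ω) = 4 * ω * m := Nat.sub_add_cancel hA'
  set D := if t = 0 then A else (2 * m - 2) * t + 2 + A with hDdef
  -- upper bound
  have hub : ∀ b : CEMon m, ¬ CEBad m b → CElen m b = k → CEwt m b = ω →
      CEdeg m b ≤ D := by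
    rintro ⟨e, S⟩ hbad hlen hwt
    simp only [CEBad, not_or, not_le] at hbad
    obtain ⟨hel, hlS⟩ := hbad
    simp only [CElen] at hlen
    simp only [CEwt] at hwt
    simp only [CEdeg]
    have hjm : ∀ j ∈ S, j.val < m := by
      intro j hj
      have h1 : j.val < m + 1 := j.isLt
      have h2 : j.val ≠ m := by
        intro h
        apply hlS
        have hj' : j = Fin.last m := Fin.ext (by simpa [Fin.last] using h)
        rwa [hj'] at hj
      omega
    have hT := sum_sq_bound (S.image Fin.val) m (by
      intro x hx
      obtain ⟨j, hj, rfl⟩ := Finset.mem_image.1 hx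
      exact hjm j hj)
    rw [Finset.sum_image (fun a _ b _ h => Fin.val_injective h),
        Finset.card_image_of_injective _ Fin.val_injective, hwt] at hT
    have hWsum : (∑ j ∈ S, (2 * m + 2 * j.val - 1)) + ω
        = 2 * ω * m + 2 * ∑ j ∈ S, j.val := by
      nth_rewrite 1 [← hwt]
      rw [Finset.card_eq_sum_ones, ← Finset.sum_add_distrib,
        Finset.sum_congr rfl
          (fun j _ => (by omega : 2 * m + 2 * j.val - 1 + 1 = 2 * m + 2 * j.val)),
        Finset.sum_add_distrib, Finset.sum_const, smul_eq_mul, hwt, ← Finset.mul_sum]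
      ring
    have hWle : (∑ j ∈ S, (2 * m + 2 * j.val - 1)) ≤ A := by nlinarith [hWsum, hT, hAeq]
    have hVsplit : e (Fin.last m) + (∑ i ∈ Finset.univ.erase (Fin.last m), e i)
        = ∑ i, e i := Finset.add_sum_erase _ _ (Finset.mem_univ _)
    have hV2split : 2 * m * e (Fin.last m)
        + (∑ i ∈ Finset.univ.erase (Fin.last m), 2 * i.val * e i)
        = ∑ i, 2 * i.val * e i := by
      have h := Finset.add_sum_erase Finset.univ (fun i : Fin (m + 1) => 2 * i.val * e i)
        (Finset.mem_univ (Fin.last m))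
      simpa [Fin.last] using h
    have hVer : (∑ i ∈ Finset.univ.erase (Fin.last m), 2 * i.val * e i)
        ≤ (2 * m - 2) * ∑ i ∈ Finset.univ.erase (Fin.last m), e i := by
      rw [Finset.mul_sum]
      refine Finset.sum_le_sum fun i hi => ?_
      have hine : i ≠ Fin.last m := (Finset.mem_erase.1 hi).1
      have hiv : i.val < m := by
        have h1 : i.val < m + 1 := i.isLt
        have h2 : i.val ≠ m := fun h => hine (Fin.ext (by simpa [Fin.last] using h))
        omega
      exact Nat.mul_le_mul_right _ (by omega)
    have hst : e (Fin.last m) + (∑ i ∈ Finset.univ.erase (Fin.last m), e i) = t := by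
      omega
    by_cases ht : t = 0
    · rw [hDdef, if_pos ht]
      have h1 : e (Fin.last m) = 0 := by omega
      have h2 : (∑ i ∈ Finset.univ.erase (Fin.last m), e i) = 0 := by omega
      rw [h1] at hV2split
      rw [h2] at hVer
      simp only [mul_zero, zero_add, Nat.le_zero] at hV2split hVer
      rw [← hV2split]
      linarith [hWle, hVer]
    · rw [hDdef, if_neg ht]
      rcases (by omega : e (Fin.last m) = 0 ∨ e (Fin.last m) = 1) with h1 | h1
      · have h2 : (∑ i ∈ Finset.univ.erase (Fin.last m), e i) = t := by omega
        rw [h1] at hV2split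
        rw [h2] at hVer
        simp only [mul_zero, zero_add] at hV2split
        rw [← hV2split]
        linarith [hWle, hVer]
      · have h2 : (∑ i ∈ Finset.univ.erase (Fin.last m), e i) + 1 = t := by omega
        rw [h1] at hV2split
        have h3 : (2 * m - 2) * t
            = (2 * m - 2) * (∑ i ∈ Finset.univ.erase (Fin.last m), e i) + (2 * m - 2) := by
          rw [← h2, Nat.mul_succ]
        rw [← hV2split]
        have h4 : 2 * m ≤ 2 * m - 2 + 2 := by omega
        linarith [hWle, hVer, h3, h4]
  -- the witness set of odd generators
  have hu' : ∀ x ∈ Finset.Ico (m - ω) m, x < m + 1 := fun x hx => by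
    have := (Finset.mem_Ico.1 hx).2; omega
  set S₀ : Finset (Fin (m + 1)) := (Finset.Ico (m - ω) m).attachFin hu' with hS₀def
  have hcard₀ : S₀.card = ω := by
    rw [hS₀def, Finset.card_attachFin, Nat.card_Ico]; omega
  have hlast₀ : Fin.last m ∉ S₀ := by
    intro hmem
    rw [hS₀def, Finset.mem_attachFin] at hmem
    have h := (Finset.mem_Ico.1 hmem).2
    simp [Fin.last] at h
  have hW₀ : (∑ j ∈ S₀, (2 * m + 2 * j.val - 1)) = A := by
    rw [hS₀def, sum_attachFin _ hu' (fun x => 2 * m + 2 * x - 1)]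
    have step1 : ∑ x ∈ Finset.Ico (m - ω) m, (2 * m + 2 * x - 1)
        = ω * (2 * m - 1) + 2 * ∑ x ∈ Finset.Ico (m - ω) m, x := by
      rw [Finset.sum_congr rfl
          (fun x _ => (by omega : 2 * m + 2 * x - 1 = (2 * m - 1) + 2 * x)),
        Finset.sum_add_distrib, Finset.sum_const, Nat.card_Ico, smul_eq_mul,
        ← Finset.mul_sum]
      congr 2
      omega
    rw [step1]
    have hcons : (∑ x ∈ Finset.range (m - ω), x) + (∑ x ∈ Finset.Ico (m - ω) m, x)
        = ∑ x ∈ Finset.range m, x := by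
      simp only [Finset.range_eq_Ico]
      exact Finset.sum_Ico_consecutive _ (Nat.zero_le _) (by omega)
    have hXm := gauss m
    have hXu := gauss (m - ω)
    have huz : ((m - ω : ℕ) : ℤ) + (ω : ℤ) = (m : ℤ) := by
      rw [Nat.cast_sub hωm]; ring
    have hconsz : (∑ x ∈ Finset.range (m - ω), (x : ℤ))
        + (∑ x ∈ Finset.Ico (m - ω) m, (x : ℤ))
        = ∑ x ∈ Finset.range m, (x : ℤ) := by
      have hc := congrArg (Nat.cast : ℕ → ℤ) hcons
      push_cast at hc
      exact hc
    have hgoal : (ω : ℤ) * (2 * m - 1) + 2 * (∑ x ∈ Finset.Ico (m - ω) m, (x : ℤ))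
        = 4 * (ω : ℤ) * m - ((ω : ℤ) ^ 2 + 2 * ω) := by
      linear_combination hXm - hXu + 2 * hconsz + (1 + (ω : ℤ) - ((m - ω : ℕ) : ℤ) - (m : ℤ)) * huz
    have hcast : ((ω * (2 * m - 1) + 2 * ∑ x ∈ Finset.Ico (m - ω) m, x : ℕ) : ℤ) = (A : ℤ) := by
      rw [hAdef]
      push_cast [Nat.cast_sub hA', Nat.cast_sub (show 1 ≤ 2 * m by omega)]
      linear_combination hgoal
    exact_mod_cast hcast
  -- witness
  have hwit : ∃ b : CEMon m, ¬ CEBad m b ∧ CElen m b = k ∧ CEdeg m b = D ∧ CEwt m b = ω := by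
    by_cases ht : t = 0
    · refine ⟨(0, S₀), ?_, ?_, ?_, ?_⟩
      · simp [CEBad, hlast₀]
      · simp only [CElen, hcard₀]
        simp
        omega
      · simp only [CEdeg]
        simp only [Pi.zero_apply, mul_zero, Finset.sum_const_zero, zero_add]
        rw [hW₀, hDdef, if_pos ht]
      · simpa [CEwt] using hcard₀
    · have hpl : (⟨m - 1, by omega⟩ : Fin (m + 1)) ≠ Fin.last m := by
        simp only [ne_eq, Fin.ext_iff, Fin.val_last]
        omega
      refine ⟨(Pi.single (Fin.last m) 1 + Pi.single ⟨m - 1, by omega⟩ (t - 1), S₀),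
        ?_, ?_, ?_, ?_⟩
      · simp only [CEBad, not_or, not_le]
        refine ⟨?_, hlast₀⟩
        simp [Pi.single_eq_same, Pi.single_eq_of_ne (Ne.symm hpl)]
      · simp only [CElen, hcard₀]
        have h1 : ∑ i : Fin (m + 1),
            ((Pi.single (Fin.last m) 1 + Pi.single (⟨m - 1, by omega⟩ : Fin (m + 1)) (t - 1) :
              Fin (m + 1) → ℕ)) i
            = 1 + (t - 1) := by
          simp only [Pi.add_apply, Finset.sum_add_distrib]
          have e1 := sum_mul_single (Fin.last m) 1 (fun _ => 1)
          have e2 := sum_mul_single (⟨m - 1, by omega⟩ : Fin (m + 1)) (t - 1) (fun _ => 1)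
          simp only [one_mul] at e1 e2
          rw [e1, e2]
        rw [h1]
        omega
      · simp only [CEdeg]
        have h1 : ∑ i : Fin (m + 1), 2 * i.val *
            ((Pi.single (Fin.last m) 1 + Pi.single (⟨m - 1, by omega⟩ : Fin (m + 1)) (t - 1) :
              Fin (m + 1) → ℕ) i)
            = 2 * m + 2 * (m - 1) * (t - 1) := by
          simp only [Pi.add_apply, mul_add, Finset.sum_add_distrib]
          rw [sum_mul_single (Fin.last m) 1 (fun i : Fin (m + 1) => 2 * i.val),
            sum_mul_single (⟨m - 1, by omega⟩ : Fin (m + 1)) (t - 1) (fun i : Fin (m + 1) => 2 * i.val)]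
          simp [Fin.val_last]
        rw [h1, hW₀, hDdef, if_neg ht]
        have h2 : 2 * (m - 1) = 2 * m - 2 := by omega
        have h3 : (2 * m - 2) * t = (2 * m - 2) * (t - 1) + (2 * m - 2) := by
          have h4 : t = t - 1 + 1 := by omega
          calc (2 * m - 2) * t = (2 * m - 2) * (t - 1 + 1) := by rw [← h4]
            _ = (2 * m - 2) * (t - 1) + (2 * m - 2) := by rw [Nat.mul_succ]
        rw [h2]
        have h5 : 2 * m = 2 * m - 2 + 2 := by omega
        linarith [h3, h5]
      · simpa [CEwt] using hcard₀
  refine ⟨D, ⟨?_, ?_⟩, ?_⟩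
  · show CErOmega m k D ω ≠ ⊥
    unfold CErOmega
    rw [supported_ne_bot_iff]
    obtain ⟨b, h1, h2, h3, h4⟩ := hwit
    exact ⟨b, h1, h2, h3, h4⟩
  · intro i hi
    simp only [Set.mem_setOf_eq] at hi
    unfold CErOmega at hi
    rw [supported_ne_bot_iff] at hi
    obtain ⟨b, h1, h2, h3, h4⟩ := hi
    exact h3 ▸ hub b h1 h2 h4
  · split_ifs with h
    · have ht0 : t = 0 := by
        obtain ⟨⟨c, hc⟩, h2, h3⟩ := h
        omega
      rw [hDdef, if_pos ht0, hAdef]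
      push_cast [Nat.cast_sub hA']
      ring
    · have ht0 : t ≠ 0 := by
        intro h0
        exact h ⟨⟨ω, by omega⟩, by omega, by omega⟩
      rw [hDdef, if_neg ht0, hAdef, htdef]
      push_cast [Nat.cast_sub hA', Nat.cast_sub (show 2 ≤ 2 * m by omega), Nat.cast_sub hω2]
      ring
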